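/- Suppose each f_j is σ-strongly convex (σ > 0), d(x) is the unique global minimizer of d ↦ Q(x,d), and t(x) = Q(x,d(x)). Then t(x) ≤ −(σ/2)‖d(x)‖². -/

import Mathlib

open Filter Topology Finset
open scoped RealInnerProductSpace

noncomputable section

/-- One-sided directional derivative: `c = F'(x; d) = lim_{α→0⁺} (F(x+αd) − F(x))/α`. -/
def HasDirDeriv {n : ℕ} (F : EuclideanSpace ℝ (Fin n) → ℝ)
    (x d : EuclideanSpace ℝ (Fin n)) (c : ℝ) : Prop :=
  Filter.Tendsto (fun α : ℝ => (F (x + α • d) - F x) / α) (nhdsWithin 0 (Set.Ioi 0)) (nhds c)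

/-- Subdifferential of a convex function: `∂h(x) = {ξ : h(y) ≥ h(x) + ⟪ξ, y − x⟫ ∀ y}`. -/
def subdiff {n : ℕ} (h : EuclideanSpace ℝ (Fin n) → ℝ) (x : EuclideanSpace ℝ (Fin n)) :
    Set (EuclideanSpace ℝ (Fin n)) :=
  {ξ | ∀ y, h x + ⟪ξ, y - x⟫ ≤ h y}

/-- `σ`-strong convexity: `f(αx+(1−α)y) ≤ αf(x)+(1−α)f(y) − (σ/2)α(1−α)‖x−y‖²`. -/
def StronglyConvexFun {n : ℕ} (σ : ℝ) (f : EuclideanSpace ℝ (Fin n) → ℝ) : Prop :=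
  ∀ x y : EuclideanSpace ℝ (Fin n), ∀ α : ℝ, 0 ≤ α → α ≤ 1 →
    f (α • x + (1 - α) • y) ≤ α * f x + (1 - α) * f y - σ / 2 * α * (1 - α) * ‖x - y‖ ^ 2

/-- `Q_j(x,d) = ∇f_j(x)ᵀd + ½ dᵀ∇²f_j(x)d + g_j(x+d) − g_j(x)`, where the Hessian is
the Fréchet derivative of the gradient. -/
def Qj {n m : ℕ} (f g : Fin (m + 1) → EuclideanSpace ℝ (Fin n) → ℝ)
    (j : Fin (m + 1)) (x d : EuclideanSpace ℝ (Fin n)) : ℝ :=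
  ⟪gradient (f j) x, d⟫ + (1 / 2) * ⟪(fderiv ℝ (gradient (f j)) x) d, d⟫
    + g j (x + d) - g j x

/-- `Q(x,d) = max_{1 ≤ j ≤ m} Q_j(x,d)`. -/
def Qmax {n m : ℕ} (f g : Fin (m + 1) → EuclideanSpace ℝ (Fin n) → ℝ)
    (x d : EuclideanSpace ℝ (Fin n)) : ℝ :=
  Finset.univ.sup' Finset.univ_nonempty (fun j => Qj f g j x d)

lemma grad_lower_bound {n : ℕ} {σ : ℝ} {f : EuclideanSpace ℝ (Fin n) → ℝ}
    (hf : ContDiff ℝ 2 f) (hsc : StronglyConvexFun σ f)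
    (x y : EuclideanSpace ℝ (Fin n)) :
    f x + ⟪gradient f x, y - x⟫ + σ / 2 * ‖y - x‖ ^ 2 ≤ f y := by
  have hdf : DifferentiableAt ℝ f x := (hf.differentiable (by norm_num)).differentiableAt
  have hg : HasGradientAt f (gradient f x) x := hdf.hasGradientAt
  have hline : HasDerivAt (fun α : ℝ => x + α • (y - x)) (y - x) 0 := by
    simpa using ((hasDerivAt_id (0 : ℝ)).smul_const (y - x)).const_add x
  have hφ : HasDerivAt (fun α : ℝ => f (x + α • (y - x))) ⟪gradient f x, y - x⟫ 0 := by
    have h0 : HasFDerivAt f (InnerProductSpace.toDual ℝ _ (gradient f x)) (x + (0:ℝ) • (y - x)) := by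
      simpa using hg.hasFDerivAt
    simpa [InnerProductSpace.toDual_apply_apply, Function.comp_def] using h0.comp_hasDerivAt 0 hline
  have hslope := hφ.tendsto_slope_zero_right
  have hev : ∀ᶠ t : ℝ in 𝓝[>] 0,
      t⁻¹ • (f (x + (0 + t) • (y - x)) - f (x + (0:ℝ) • (y - x)))
        ≤ f y - f x - σ / 2 * (1 - t) * ‖y - x‖ ^ 2 := by
    filter_upwards [Ioc_mem_nhdsGT_of_mem ⟨le_refl 0, zero_lt_one⟩] with t ht
    have hsc' := hsc y x t ht.1.le ht.2
    have harg : t • y + (1 - t) • x = x + (0 + t) • (y - x) := by module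
    rw [harg] at hsc'
    have h1 : f (x + (0 + t) • (y - x)) - f (x + (0:ℝ) • (y - x))
        ≤ t * (f y - f x - σ / 2 * (1 - t) * ‖y - x‖ ^ 2) := by
      simp only [zero_smul, add_zero]
      nlinarith [norm_nonneg (y - x)]
    have := mul_le_mul_of_nonneg_left h1 (inv_nonneg.2 ht.1.le)
    rw [inv_mul_cancel_left₀ ht.1.ne'] at this
    simpa [smul_eq_mul] using this
  have hrhs : Tendsto (fun t : ℝ => f y - f x - σ / 2 * (1 - t) * ‖y - x‖ ^ 2) (𝓝[>] 0)
      (𝓝 (f y - f x - σ / 2 * ‖y - x‖ ^ 2)) := by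
    have : Continuous fun t : ℝ => f y - f x - σ / 2 * (1 - t) * ‖y - x‖ ^ 2 := by continuity
    have h2 := (this.tendsto 0).mono_left (nhdsWithin_le_nhds : 𝓝[>] (0:ℝ) ≤ 𝓝 0)
    simpa using h2
  have := le_of_tendsto_of_tendsto hslope hrhs hev
  linarith

lemma hessian_lower_bound {n : ℕ} {σ : ℝ} {f : EuclideanSpace ℝ (Fin n) → ℝ}
    (hf : ContDiff ℝ 2 f) (hsc : StronglyConvexFun σ f)
    (x d : EuclideanSpace ℝ (Fin n)) :
    σ * ‖d‖ ^ 2 ≤ ⟪(fderiv ℝ (gradient f) x) d, d⟫ := by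
  have hmono : ∀ u v : EuclideanSpace ℝ (Fin n),
      σ * ‖v - u‖ ^ 2 ≤ ⟪gradient f v - gradient f u, v - u⟫ := by
    intro u v
    have h1 := grad_lower_bound hf hsc u v
    have h2 := grad_lower_bound hf hsc v u
    have e1 : ⟪gradient f v, u - v⟫ = -⟪gradient f v, v - u⟫ := by
      rw [show u - v = -(v - u) by abel, inner_neg_right]
    have e2 : ‖u - v‖ = ‖v - u‖ := norm_sub_rev _ _
    rw [e1, e2] at h2
    rw [inner_sub_left]
    linarith
  have hgrad : ContDiff ℝ 1 (gradient f) := by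
    have h1 : ContDiff ℝ 1 (fderiv ℝ f) := hf.fderiv_right (by norm_num)
    exact (InnerProductSpace.toDual ℝ (EuclideanSpace ℝ (Fin n))).symm.contDiff.comp h1
  have hdg : DifferentiableAt ℝ (gradient f) (x + (0:ℝ) • d) := by
    simpa using (hgrad.differentiable one_ne_zero).differentiableAt (x := x)
  have hline : HasDerivAt (fun t : ℝ => x + t • d) d 0 := by
    simpa using ((hasDerivAt_id (0 : ℝ)).smul_const d).const_add x
  have hH : HasDerivAt (fun t : ℝ => gradient f (x + t • d)) ((fderiv ℝ (gradient f) x) d) 0 := by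
    have := hdg.hasFDerivAt.comp_hasDerivAt 0 hline
    simpa [Function.comp_def] using this
  have hψ : HasDerivAt (fun t : ℝ => ⟪gradient f (x + t • d), d⟫)
      ⟪(fderiv ℝ (gradient f) x) d, d⟫ 0 := by
    have := hH.inner ℝ (hasDerivAt_const (0:ℝ) d)
    simpa using this
  have hslope := hψ.tendsto_slope_zero_right
  refine ge_of_tendsto hslope ?_
  filter_upwards [self_mem_nhdsWithin] with t (ht : 0 < t)
  have h1 := hmono x (x + t • d)
  have e1 : x + t • d - x = t • d := by abel
  rw [e1, real_inner_smul_right, norm_smul] at h1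
  rw [Real.norm_eq_abs, abs_of_pos ht] at h1
  have h1' : t * (σ * t * ‖d‖ ^ 2) ≤ t * ⟪gradient f (x + t • d) - gradient f x, d⟫ := by
    nlinarith [h1]
  have h2 := le_of_mul_le_mul_left h1' ht
  have e3 : (fun s : ℝ => ⟪gradient f (x + s • d), d⟫) (0 + t)
      - (fun s : ℝ => ⟪gradient f (x + s • d), d⟫) 0
      = ⟪gradient f (x + t • d) - gradient f x, d⟫ := by
    simp [inner_sub_left]
  calc σ * ‖d‖ ^ 2 = t⁻¹ * (t * (σ * ‖d‖ ^ 2)) := by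
        field_simp
    _ ≤ t⁻¹ * ⟪gradient f (x + t • d) - gradient f x, d⟫ := by
        apply mul_le_mul_of_nonneg_left _ (inv_nonneg.2 ht.le)
        nlinarith [h2]
    _ = t⁻¹ • ((fun s : ℝ => ⟪gradient f (x + s • d), d⟫) (0 + t)
          - (fun s : ℝ => ⟪gradient f (x + s • d), d⟫) 0) := by
        rw [e3]; simp [smul_eq_mul]

/-- if each `f_j` is `σ`-strongly convex, `d(x)` is the unique global
minimizer of `d ↦ Q(x,d)` and `t(x) = Q(x,d(x))`, then `t(x) ≤ −(σ/2)‖d(x)‖²`. -/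
theorem t_le_neg_sigma_half_norm_sq {n m : ℕ} (σ : ℝ) (hσ : 0 < σ)
    (f g : Fin (m + 1) → EuclideanSpace ℝ (Fin n) → ℝ)
    (hfsc : ∀ j, StronglyConvexFun σ (f j))
    (hfC2 : ∀ j, ContDiff ℝ 2 (f j))
    (hgconv : ∀ j, ConvexOn ℝ Set.univ (g j))
    (hgcont : ∀ j, Continuous (g j))
    (x dx : EuclideanSpace ℝ (Fin n)) (t : ℝ)
    (hmin : ∀ d, Qmax f g x dx ≤ Qmax f g x d)
    (huniq : ∀ d, (∀ d', Qmax f g x d ≤ Qmax f g x d') → d = dx)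
    (ht : t = Qmax f g x dx) :
    t ≤ -(σ / 2) * ‖dx‖ ^ 2 := by
  have hstep : ∀ α : ℝ, α ∈ Set.Ioo (0:ℝ) 1 → t ≤ -(σ / 2) * (1 - α) * ‖dx‖ ^ 2 := by
    intro α hα
    obtain ⟨hα0, hα1⟩ := hα
    have key : ∀ j, Qj f g j x ((1 - α) • dx)
        ≤ (1 - α) * Qj f g j x dx - σ / 2 * α * (1 - α) * ‖dx‖ ^ 2 := by
      intro j
      have hH := hessian_lower_bound (hfC2 j) (hfsc j) x dx
      have hgj := (hgconv j).2 (Set.mem_univ x) (Set.mem_univ (x + dx))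
        hα0.le (by linarith : (0:ℝ) ≤ 1 - α) (by ring)
      have harg : α • x + (1 - α) • (x + dx) = x + (1 - α) • dx := by module
      rw [harg, smul_eq_mul, smul_eq_mul] at hgj
      unfold Qj
      rw [real_inner_smul_right, map_smul, inner_smul_left, real_inner_smul_right]
      simp only [RCLike.conj_to_real, conj_trivial]
      nlinarith [mul_pos hα0 (by linarith : (0:ℝ) < 1 - α)]
    have hQle : Qmax f g x ((1 - α) • dx) ≤ (1 - α) * t - σ / 2 * α * (1 - α) * ‖dx‖ ^ 2 := by
      apply Finset.sup'_le
      intro j _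
      have h1 := key j
      have h2 : Qj f g j x dx ≤ Qmax f g x dx :=
        Finset.le_sup' (fun j => Qj f g j x dx) (Finset.mem_univ j)
      have h3 : (1 - α) * Qj f g j x dx ≤ (1 - α) * t := by
        rw [ht]; exact mul_le_mul_of_nonneg_left h2 (by linarith)
      linarith
    have h4 : t ≤ (1 - α) * t - σ / 2 * α * (1 - α) * ‖dx‖ ^ 2 := by
      have := hmin ((1 - α) • dx)
      rw [← ht] at this
      linarith
    have h5 : α * t ≤ α * (-(σ / 2) * (1 - α) * ‖dx‖ ^ 2) := by nlinarith
    exact le_of_mul_le_mul_left h5 hα0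
  have htend : Tendsto (fun α : ℝ => -(σ / 2) * (1 - α) * ‖dx‖ ^ 2) (𝓝[>] 0)
      (𝓝 (-(σ / 2) * ‖dx‖ ^ 2)) := by
    have hc : Continuous fun α : ℝ => -(σ / 2) * (1 - α) * ‖dx‖ ^ 2 := by continuity
    have h2 := (hc.tendsto 0).mono_left (nhdsWithin_le_nhds : 𝓝[>] (0:ℝ) ≤ 𝓝 0)
    simpa using h2
  refine ge_of_tendsto htend ?_
  filter_upwards [Ioo_mem_nhdsGT_of_mem ⟨le_refl (0:ℝ), zero_lt_one⟩] with α hα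
  exact hstep α hα
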